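/- Let q be a prime power and n a positive integer, and let U ⊆ P_q(n) be a distributive sublattice of the linear lattice P_q(n) (a subset closed under subspace sum and intersection whose induced lattice is distributive) on which a complement function is defined. Then |U| ≤ 2^n, and |U| = 2^n if and only if U is a code derived from a fixed basis, i.e., there exists a basis {e₁, …, e_n} of F_q^n such that U = { span{e_i : i ∈ I} : I ⊆ {1, …, n} }. -/
import Mathlib


open Module

/-- The subspace distance `d_S(X, Y) = dim(X + Y) - dim(X ∩ Y)`. -/
noncomputable def subspaceDist {F V : Type*} [Field F] [AddCommGroup V] [Module F V]
    (X Y : Submodule F V) : ℕ :=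
  finrank F ↥(X ⊔ Y) - finrank F ↥(X ⊓ Y)

/-- `f : U → U` is a complement function on `U ⊆ P_q(n)`: for every `X ∈ U`,
`X ∩ f(X) = {0}` and `X + f(X) = F_q^n`, `dim f(X) = n - dim X`, `f(f(X)) = X`, and
`f` preserves the subspace distance. -/
def IsComplementFun {F V : Type*} [Field F] [AddCommGroup V] [Module F V]
    (n : ℕ) (U : Set (Submodule F V)) (f : U → U) : Prop :=
  (∀ X : U, (X : Submodule F V) ⊓ (f X : Submodule F V) = ⊥ ∧
    (X : Submodule F V) ⊔ (f X : Submodule F V) = ⊤) ∧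
  (∀ X : U, finrank F ↥(f X : Submodule F V) = n - finrank F ↥(X : Submodule F V)) ∧
  (∀ X : U, f (f X) = X) ∧
  (∀ X Y : U, subspaceDist (f X : Submodule F V) (f Y : Submodule F V) =
    subspaceDist (X : Submodule F V) (Y : Submodule F V))

section Aux

variable {F V : Type*} [Field F] [AddCommGroup V] [Module F V]

/-- `A` is an atom of the sublattice `U`. -/
def IsAtomIn (U : Set (Submodule F V)) (A : Submodule F V) : Prop :=
  A ∈ U ∧ A ≠ ⊥ ∧ ∀ Y ∈ U, Y ≤ A → Y = ⊥ ∨ Y = A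

/-- In a sublattice where join distributes over meet, meet distributes over join. -/
theorem meet_distrib_aux (U : Set (Submodule F V))
    (hmeet : ∀ X ∈ U, ∀ Y ∈ U, X ⊓ Y ∈ U)
    (hdist : ∀ X ∈ U, ∀ Y ∈ U, ∀ Z ∈ U, X ⊔ (Y ⊓ Z) = (X ⊔ Y) ⊓ (X ⊔ Z))
    {X Y Z : Submodule F V} (hX : X ∈ U) (hY : Y ∈ U) (hZ : Z ∈ U) :
    X ⊓ (Y ⊔ Z) = (X ⊓ Y) ⊔ (X ⊓ Z) := by
  have h1 : (X ⊓ Y) ⊔ (X ⊓ Z) = ((X ⊓ Y) ⊔ X) ⊓ ((X ⊓ Y) ⊔ Z) :=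
    hdist _ (hmeet _ hX _ hY) _ hX _ hZ
  have h2 : (X ⊓ Y) ⊔ X = X := sup_eq_right.mpr inf_le_left
  have h3 : (X ⊓ Y) ⊔ Z = (Z ⊔ X) ⊓ (Z ⊔ Y) := by
    rw [sup_comm]; exact hdist _ hZ _ hX _ hY
  rw [h1, h2, h3, ← inf_assoc, inf_eq_left.mpr (le_sup_right : X ≤ Z ⊔ X),
    sup_comm Y Z]

/-- Finite joins of elements of a sublattice containing `⊥` are in the sublattice. -/
theorem finsetSup_mem_aux (U : Set (Submodule F V))
    (hjoin : ∀ X ∈ U, ∀ Y ∈ U, X ⊔ Y ∈ U) (hbot : ⊥ ∈ U)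
    (S : Finset (Submodule F V)) (hS : ∀ A ∈ S, A ∈ U) : S.sup id ∈ U := by
  classical
  induction S using Finset.induction_on with
  | empty => simpa using hbot
  | @insert B S hBS ih =>
    rw [Finset.sup_insert]
    exact hjoin _ (hS _ (Finset.mem_insert_self _ _)) _
      (ih fun A hA => hS _ (Finset.mem_insert_of_mem hA))

/-- Every nonzero element of `U` has an atom of `U` below it. -/
theorem exists_atomIn_le_aux [FiniteDimensional F V] (U : Set (Submodule F V)) :
    ∀ k, ∀ X : Submodule F V, finrank F X ≤ k → X ∈ U → X ≠ ⊥ → ∃ A, IsAtomIn U A ∧ A ≤ X := by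
  intro k
  induction k with
  | zero =>
    intro X h hXU hne
    exact absurd (Submodule.finrank_eq_zero.mp (Nat.le_zero.mp h)) hne
  | succ k ih =>
    intro X h hXU hne
    by_cases hat : ∀ Y ∈ U, Y ≤ X → Y = ⊥ ∨ Y = X
    · exact ⟨X, ⟨hXU, hne, hat⟩, le_rfl⟩
    · push_neg at hat
      obtain ⟨Y, hYU, hYX, hY0, hYne⟩ := hat
      have hlt : finrank F Y < finrank F X :=
        Submodule.finrank_lt_finrank_of_lt (lt_of_le_of_ne hYX hYne)
      obtain ⟨A, hA, hAY⟩ := ih Y (by omega) hYU hY0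
      exact ⟨A, hA, hAY.trans hYX⟩

/-- Two distinct atoms of `U` intersect trivially. -/
theorem atomIn_inf_eq_bot_aux (U : Set (Submodule F V))
    (hmeet : ∀ X ∈ U, ∀ Y ∈ U, X ⊓ Y ∈ U)
    {A B : Submodule F V} (hA : IsAtomIn U A) (hB : IsAtomIn U B) (hne : A ≠ B) :
    A ⊓ B = ⊥ := by
  rcases hA.2.2 _ (hmeet _ hA.1 _ hB.1) inf_le_left with h | h
  · exact h
  · have hAB : A ≤ B := h ▸ inf_le_right
    rcases hB.2.2 _ hA.1 hAB with h' | h'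
    · exact absurd h' hA.2.1
    · exact absurd h' hne

/-- An atom not in a finite set of atoms is disjoint from their join. -/
theorem atomIn_inf_sup_eq_bot_aux (U : Set (Submodule F V))
    (hjoin : ∀ X ∈ U, ∀ Y ∈ U, X ⊔ Y ∈ U)
    (hmeet : ∀ X ∈ U, ∀ Y ∈ U, X ⊓ Y ∈ U)
    (hdist : ∀ X ∈ U, ∀ Y ∈ U, ∀ Z ∈ U, X ⊔ (Y ⊓ Z) = (X ⊔ Y) ⊓ (X ⊔ Z))
    (hbot : ⊥ ∈ U) {A : Submodule F V} (hA : IsAtomIn U A)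
    (S : Finset (Submodule F V)) (hS : ∀ B ∈ S, IsAtomIn U B) (hAS : A ∉ S) :
    A ⊓ S.sup id = ⊥ := by
  classical
  induction S using Finset.induction_on with
  | empty => simp
  | @insert B S hBS ih =>
    rw [Finset.sup_insert]
    have hB := hS B (Finset.mem_insert_self _ _)
    have hSU : ∀ C ∈ S, IsAtomIn U C := fun C hC => hS C (Finset.mem_insert_of_mem hC)
    have hsupU : S.sup id ∈ U := finsetSup_mem_aux U hjoin hbot S fun C hC => (hSU C hC).1
    have hid : (id B : Submodule F V) = B := rfl
    rw [hid, meet_distrib_aux U hmeet hdist hA.1 hB.1 hsupU,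
      atomIn_inf_eq_bot_aux U hmeet hA hB (fun h => hAS (h ▸ Finset.mem_insert_self _ _)),
      ih hSU (fun h => hAS (Finset.mem_insert_of_mem h)), sup_bot_eq]

/-- The dimension of a join of a finite set of atoms is the sum of the dimensions. -/
theorem finrank_finsetSup_aux [FiniteDimensional F V] (U : Set (Submodule F V))
    (hjoin : ∀ X ∈ U, ∀ Y ∈ U, X ⊔ Y ∈ U)
    (hmeet : ∀ X ∈ U, ∀ Y ∈ U, X ⊓ Y ∈ U)
    (hdist : ∀ X ∈ U, ∀ Y ∈ U, ∀ Z ∈ U, X ⊔ (Y ⊓ Z) = (X ⊔ Y) ⊓ (X ⊔ Z))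
    (hbot : ⊥ ∈ U)
    (S : Finset (Submodule F V)) (hS : ∀ B ∈ S, IsAtomIn U B) :
    finrank F ↥(S.sup id) = ∑ B ∈ S, finrank F ↥B := by
  classical
  induction S using Finset.induction_on with
  | empty => simp
  | @insert B S hBS ih =>
    have hB := hS B (Finset.mem_insert_self _ _)
    have hSU : ∀ C ∈ S, IsAtomIn U C := fun C hC => hS C (Finset.mem_insert_of_mem hC)
    have key := Submodule.finrank_sup_add_finrank_inf_eq B (S.sup id)
    rw [atomIn_inf_sup_eq_bot_aux U hjoin hmeet hdist hbot hB S hSU hBS, finrank_bot] at key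
    have hid : (id B : Submodule F V) = B := rfl
    rw [Finset.sup_insert, Finset.sum_insert hBS, hid, ← ih hSU]
    omega

/-- A basis vector lies in the span of an image iff its index is in the set. -/
theorem basis_mem_span_image_aux {ι : Type*} (b : Basis ι F V) (s : Set ι) (i : ι) :
    b i ∈ Submodule.span F (b '' s) ↔ i ∈ s := by
  rw [Basis.mem_span_image, Basis.repr_self, Finsupp.support_single_ne_zero i one_ne_zero]
  simp

theorem span_image_eq_biSup_aux {ι : Type*} (v : ι → V) (I : Set ι) :
    Submodule.span F (v '' I) = ⨆ i ∈ I, Submodule.span F {v i} := by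
  have : v '' I = ⋃ i ∈ I, {v i} := by ext x; simp [Set.mem_iUnion, eq_comm]
  rw [this, Submodule.span_iUnion₂]

end Aux

/-- If `U ⊆ P_q(n)` is a distributive sublattice of the linear lattice
(closed under subspace sum and intersection, satisfying the distributive law) on which
a complement function is defined, then `|U| ≤ 2 ^ n`, with equality iff `U` is a code
derived from a fixed basis `e₁, …, e_n` of `F_q^n`, i.e.
`U = { span {e_i : i ∈ I} : I ⊆ {1, …, n} }`. -/
theorem distrib_sublattice_with_complement_card
    (q n : ℕ) (hq : IsPrimePow q) (hn : 0 < n)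
    (F V : Type*) [Field F] [Fintype F] (hF : Fintype.card F = q)
    [AddCommGroup V] [Module F V] [FiniteDimensional F V] (hV : finrank F V = n)
    (U : Set (Submodule F V))
    (hjoin : ∀ X ∈ U, ∀ Y ∈ U, X ⊔ Y ∈ U)
    (hmeet : ∀ X ∈ U, ∀ Y ∈ U, X ⊓ Y ∈ U)
    (hdist : ∀ X ∈ U, ∀ Y ∈ U, ∀ Z ∈ U, X ⊔ (Y ⊓ Z) = (X ⊔ Y) ⊓ (X ⊔ Z))
    (f : U → U) (hf : IsComplementFun n U f) :
    U.ncard ≤ 2 ^ n ∧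
      (U.ncard = 2 ^ n ↔ ∃ e : Basis (Fin n) F V,
        U = {W : Submodule F V | ∃ I : Set (Fin n), W = Submodule.span F (e '' I)}) := by
  classical
  have hFinV : Finite V := Module.finite_of_finite F
  have hFinSub : Finite (Submodule F V) :=
    Finite.of_injective (fun S => (S : Set V)) SetLike.coe_injective
  -- injectivity of I ↦ span (e '' I) for a basis e, used twice
  have hspan_inj : ∀ e : Basis (Fin n) F V,
      Function.Injective (fun I : Set (Fin n) => Submodule.span F (⇑e '' I)) := by
    intro e I J h
    have h' : Submodule.span F (⇑e '' I) = Submodule.span F (⇑e '' J) := h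
    ext i
    rw [← basis_mem_span_image_aux e I i, ← basis_mem_span_image_aux e J i, h']
  have hbackward : ∀ e : Basis (Fin n) F V,
      U = {W : Submodule F V | ∃ I : Set (Fin n), W = Submodule.span F (e '' I)} →
      U.ncard = 2 ^ n := by
    intro e hUeq
    have himg : U = (fun I : Set (Fin n) => Submodule.span F (⇑e '' I)) '' Set.univ := by
      rw [hUeq]; ext W; simp [eq_comm]
    rw [himg, Set.ncard_image_of_injective _ (hspan_inj e), Set.ncard_univ,
      Nat.card_eq_fintype_card]
    simp
  rcases U.eq_empty_or_nonempty with hUe | hUne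
  · subst hUe
    refine ⟨by simp, ?_, fun ⟨e, he⟩ => hbackward e he⟩
    intro h
    rw [Set.ncard_empty] at h
    exact absurd h.symm (ne_of_gt (pow_pos two_pos n))
  obtain ⟨X0, hX0⟩ := hUne
  obtain ⟨hcomp, hdim, hinv, hd⟩ := hf
  have hbot : ⊥ ∈ U := by
    have h := (hcomp ⟨X0, hX0⟩).1
    rw [← h]; exact hmeet _ hX0 _ (f ⟨X0, hX0⟩).2
  have htop : ⊤ ∈ U := by
    have h := (hcomp ⟨X0, hX0⟩).2
    rw [← h]; exact hjoin _ hX0 _ (f ⟨X0, hX0⟩).2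
  set 𝒜 : Finset (Submodule F V) := (Set.toFinite {A | IsAtomIn U A}).toFinset with h𝒜
  have hmem𝒜 : ∀ A, A ∈ 𝒜 ↔ IsAtomIn U A := by
    intro A; rw [h𝒜, Set.Finite.mem_toFinset]; rfl
  have h𝒜U : ∀ B ∈ 𝒜, B ∈ U := fun B hB => ((hmem𝒜 B).1 hB).1
  -- every element of U is the join of the atoms below it
  have hdecomp : ∀ X ∈ U, X = (𝒜.filter (· ≤ X)).sup id := by
    intro X hXU
    have hSsub : ∀ B ∈ 𝒜.filter (· ≤ X), B ∈ U := fun B hB =>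
      h𝒜U B (Finset.mem_filter.1 hB).1
    have hWU : (𝒜.filter (· ≤ X)).sup id ∈ U := finsetSup_mem_aux U hjoin hbot _ hSsub
    set W : Submodule F V := (𝒜.filter (· ≤ X)).sup id with hW
    have hWX : W ≤ X := Finset.sup_le fun B hB => (Finset.mem_filter.1 hB).2
    by_contra hne
    set C : Submodule F V := X ⊓ (f ⟨W, hWU⟩ : Submodule F V) with hC
    have hCU : C ∈ U := hmeet _ hXU _ (f ⟨W, hWU⟩).2
    have hCne : C ≠ ⊥ := by
      intro h0
      apply hne
      have hXW : X = X ⊓ (W ⊔ (f ⟨W, hWU⟩ : Submodule F V)) := by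
        rw [(hcomp ⟨W, hWU⟩).2]; simp
      rw [meet_distrib_aux U hmeet hdist hXU hWU (f ⟨W, hWU⟩).2,
        inf_eq_right.mpr hWX, ← hC, h0, sup_bot_eq] at hXW
      exact hXW
    obtain ⟨P, hP, hPC⟩ :=
      exists_atomIn_le_aux U (finrank F C) C le_rfl hCU hCne
    have hPX : P ≤ X := hPC.trans inf_le_left
    have hPW : P ≤ W :=
      Finset.le_sup (f := id) (Finset.mem_filter.2 ⟨(hmem𝒜 P).2 hP, hPX⟩)
    have hPf : P ≤ (f ⟨W, hWU⟩ : Submodule F V) := hPC.trans inf_le_right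
    have hPbot : P ≤ (⊥ : Submodule F V) := by
      rw [← (hcomp ⟨W, hWU⟩).1]; exact le_inf hPW hPf
    exact hP.2.1 (le_bot_iff.mp hPbot)
  -- the map to sets of atoms is injective on U
  have hinj : Set.InjOn (fun X => 𝒜.filter (· ≤ X)) U := by
    intro X hX Y hY h
    have h' : 𝒜.filter (· ≤ X) = 𝒜.filter (· ≤ Y) := h
    calc X = (𝒜.filter (· ≤ X)).sup id := hdecomp X hX
      _ = (𝒜.filter (· ≤ Y)).sup id := by rw [h']
      _ = Y := (hdecomp Y hY).symm
  have hcard_le : U.ncard ≤ 2 ^ 𝒜.card := by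
    have h1 : U.ncard = ((fun X => 𝒜.filter (· ≤ X)) '' U).ncard :=
      (Set.ncard_image_of_injOn hinj).symm
    have h2 : (fun X => 𝒜.filter (· ≤ X)) '' U ⊆ ↑𝒜.powerset := by
      rintro _ ⟨X, _, rfl⟩
      simp only [Finset.coe_powerset, Set.mem_preimage, Set.mem_powerset_iff,
        Finset.coe_subset]
      exact Finset.filter_subset _ _
    calc U.ncard = ((fun X => 𝒜.filter (· ≤ X)) '' U).ncard := h1
      _ ≤ (↑𝒜.powerset : Set (Finset (Submodule F V))).ncard :=
          Set.ncard_le_ncard h2 (Set.toFinite _)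
      _ = 𝒜.powerset.card := Set.ncard_coe_finset _
      _ = 2 ^ 𝒜.card := Finset.card_powerset _
  have h𝒜atoms : ∀ B ∈ 𝒜, IsAtomIn U B := fun B hB => (hmem𝒜 B).1 hB
  have hsum : finrank F ↥(𝒜.sup id) = ∑ B ∈ 𝒜, finrank F ↥B :=
    finrank_finsetSup_aux U hjoin hmeet hdist hbot 𝒜 h𝒜atoms
  have hone_le : ∀ B ∈ 𝒜, 1 ≤ finrank F ↥B := by
    intro B hB
    have := (h𝒜atoms B hB).2.1
    rcases Nat.eq_zero_or_pos (finrank F ↥B) with h | h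
    · exact absurd (Submodule.finrank_eq_zero.mp h) this
    · exact h
  have hsum_le : ∑ B ∈ 𝒜, finrank F ↥B ≤ n := by
    rw [← hsum, ← hV]; exact Submodule.finrank_le _
  have hcard_le_sum : 𝒜.card ≤ ∑ B ∈ 𝒜, finrank F ↥B := by
    rw [Finset.card_eq_sum_ones]
    exact Finset.sum_le_sum hone_le
  have hk_le : 𝒜.card ≤ n := hcard_le_sum.trans hsum_le
  have hmain : U.ncard ≤ 2 ^ n :=
    hcard_le.trans (Nat.pow_le_pow_right (by norm_num) hk_le)
  refine ⟨hmain, ?_, fun ⟨e, he⟩ => hbackward e he⟩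
  -- forward direction of the iff
  intro hcard
  have h2 : 2 ^ n ≤ 2 ^ 𝒜.card := hcard ▸ hcard_le
  have hk : 𝒜.card = n :=
    le_antisymm hk_le ((Nat.pow_le_pow_iff_right (by norm_num)).1 h2)
  have hrank1 : ∀ B ∈ 𝒜, finrank F ↥B = 1 := by
    by_contra hcon
    push_neg at hcon
    obtain ⟨B, hB, hB1⟩ := hcon
    have hlt : ∑ _B ∈ 𝒜, 1 < ∑ B ∈ 𝒜, finrank F ↥B :=
      Finset.sum_lt_sum hone_le ⟨B, hB, lt_of_le_of_ne (hone_le B hB) (Ne.symm hB1)⟩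
    rw [← Finset.card_eq_sum_ones] at hlt
    omega
  have hsum_eq : ∑ B ∈ 𝒜, finrank F ↥B = n := by
    rw [Finset.sum_congr rfl hrank1, ← Finset.card_eq_sum_ones, hk]
  have hsup_top : 𝒜.sup id = ⊤ := by
    apply Submodule.eq_top_of_finrank_eq
    rw [hsum, hsum_eq, hV]
  have hkcard : Fintype.card { x // x ∈ 𝒜 } = n := by rw [Fintype.card_coe, hk]
  let eq1 : Fin n ≃ { x // x ∈ 𝒜 } := (Fintype.equivFinOfCardEq hkcard).symm
  set Av : Fin n → Submodule F V := fun i => (eq1 i : Submodule F V) with hAvdef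
  have hAv𝒜 : ∀ i, Av i ∈ 𝒜 := fun i => (eq1 i).2
  have hAv_surj : ∀ B ∈ 𝒜, ∃ i, Av i = B := by
    intro B hB
    exact ⟨eq1.symm ⟨B, hB⟩, by simp [hAvdef]⟩
  have hvex : ∀ i, ∃ x : V, x ∈ Av i ∧ x ≠ 0 := by
    intro i
    exact (Submodule.ne_bot_iff _).1 (h𝒜atoms _ (hAv𝒜 i)).2.1
  choose v hv hv0 using hvex
  have hspan : ∀ i, Submodule.span F {v i} = Av i := by
    intro i
    refine Submodule.eq_of_le_of_finrank_le
      ((Submodule.span_singleton_le_iff_mem _ _).2 (hv i)) ?_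
    rw [finrank_span_singleton (hv0 i), hrank1 _ (hAv𝒜 i)]
  have hiSup : ⨆ i, Submodule.span F {v i} = 𝒜.sup id := by
    simp_rw [hspan]
    rw [Finset.sup_id_eq_sSup]
    apply le_antisymm
    · exact iSup_le fun i => le_sSup (hAv𝒜 i)
    · refine sSup_le fun A hA => ?_
      obtain ⟨i, hi⟩ := hAv_surj A hA
      exact hi ▸ le_iSup Av i
  have htople : ⊤ ≤ Submodule.span F (Set.range v) := by
    rw [Submodule.span_range_eq_iSup]
    rw [show (⨆ i, Submodule.span F {v i}) = 𝒜.sup id from hiSup, hsup_top]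
  let e : Basis (Fin n) F V :=
    basisOfTopLeSpanOfCardEqFinrank v htople (by simp [hV])
  have he : ⇑e = v := coe_basisOfTopLeSpanOfCardEqFinrank v htople (by simp [hV])
  refine ⟨e, ?_⟩
  ext X
  simp only [Set.mem_setOf_eq]
  constructor
  · intro hXU
    refine ⟨{i | Av i ≤ X}, ?_⟩
    rw [he, span_image_eq_biSup_aux]
    have h2 : ⨆ i ∈ {i | Av i ≤ X}, Submodule.span F {v i}
        = (𝒜.filter (· ≤ X)).sup id := by
      simp_rw [hspan]
      rw [Finset.sup_id_eq_sSup]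
      apply le_antisymm
      · refine iSup₂_le fun i hi => le_sSup ?_
        simp only [Finset.coe_filter, Set.mem_setOf_eq]
        exact ⟨hAv𝒜 i, hi⟩
      · refine sSup_le fun A hA => ?_
        simp only [Finset.coe_filter, Set.mem_setOf_eq] at hA
        obtain ⟨i, hi⟩ := hAv_surj A hA.1
        subst hi
        exact le_iSup₂ (f := fun i (_ : Av i ≤ X) => Av i) i hA.2
    rw [h2]
    exact hdecomp X hXU
  · rintro ⟨I, rfl⟩
    rw [he, span_image_eq_biSup_aux]
    have h3 : (⨆ i ∈ I, Submodule.span F {v i}) = (I.toFinset.image Av).sup id := by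
      simp_rw [hspan]
      rw [Finset.sup_image, Function.id_comp, Finset.sup_eq_iSup]
      refine iSup_congr fun i => ?_
      rw [Set.mem_toFinset]
    rw [h3]
    exact finsetSup_mem_aux U hjoin hbot _ (by
      intro B hB
      simp only [Finset.mem_image, Set.mem_toFinset] at hB
      obtain ⟨i, _, rfl⟩ := hB
      exact h𝒜U _ (hAv𝒜 i))
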